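/- Let s₁^{(2)}, …, sₙ^{(2)} be shares in (ZMod 2)^η with XOR equal to S, let d < n, and let m₁, …, m_{n+d-1} satisfy m₁ ⊕ ⋯ ⊕ m_{n+d-1} = 0. Define sᵢ^{(3)} := sᵢ^{(2)} ⊕ mᵢ ⊕ m_{n+i} for 1 ≤ i ≤ d−1, and s_d^{(3)} := XOR over i from d to n of (sᵢ^{(2)} ⊕ mᵢ). Then s₁^{(3)} ⊕ ⋯ ⊕ s_d^{(3)} = S. -/

import Mathlib

theorem stmt_4 (η n d : ℕ) (hd0 : 0 < d) (hd : d < n) (S : Fin η → ZMod 2)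
    (s₂ m s₃ : ℕ → (Fin η → ZMod 2))
    (hs₂ : ∑ i ∈ Finset.range n, s₂ i = S)
    (hm : ∑ i ∈ Finset.range (n + d - 1), m i = 0)
    (hs₃₁ : ∀ i < d - 1, s₃ i = s₂ i + m i + m (n + i))
    (hs₃₂ : s₃ (d - 1) = ∑ i ∈ Finset.Ico (d - 1) n, (s₂ i + m i)) :
    ∑ i ∈ Finset.range d, s₃ i = S := by
  have hdn : d - 1 ≤ n := le_of_lt (lt_of_le_of_lt (Nat.sub_le d 1) hd)
  have h1 : ∑ i ∈ Finset.range d, s₃ i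
      = ∑ i ∈ Finset.range (d-1), s₃ i + s₃ (d-1) := by
    rw [← Finset.sum_range_succ, Nat.sub_add_cancel hd0]
  rw [h1, Finset.sum_congr rfl (fun i hi => hs₃₁ i (Finset.mem_range.mp hi)), hs₃₂]
  have hshift : ∑ i ∈ Finset.range (d-1), m (n+i) = ∑ j ∈ Finset.Ico n (n+d-1), m j := by
    rw [Finset.sum_Ico_eq_sum_range]
    have h : n + d - 1 - n = d - 1 := by omega
    rw [h]
  have hsplit2 : ∀ f : ℕ → Fin η → ZMod 2,
      ∑ i ∈ Finset.range (d-1), f i + ∑ i ∈ Finset.Ico (d-1) n, f i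
        = ∑ i ∈ Finset.range n, f i := by
    intro f
    rw [Finset.range_eq_Ico, Finset.range_eq_Ico]
    exact Finset.sum_Ico_consecutive f (Nat.zero_le _) hdn
  have hm' : ∑ i ∈ Finset.range n, m i + ∑ j ∈ Finset.Ico n (n+d-1), m j = 0 := by
    rw [Finset.range_eq_Ico]
    rw [Finset.sum_Ico_consecutive m (Nat.zero_le _) (by omega : n ≤ n + d - 1)]
    rw [← Finset.range_eq_Ico, hm]
  calc ∑ i ∈ Finset.range (d-1), (s₂ i + m i + m (n+i))
        + ∑ i ∈ Finset.Ico (d-1) n, (s₂ i + m i)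
      = (∑ i ∈ Finset.range (d-1), s₂ i + ∑ i ∈ Finset.Ico (d-1) n, s₂ i)
        + (∑ i ∈ Finset.range (d-1), m i + ∑ i ∈ Finset.Ico (d-1) n, m i)
        + ∑ i ∈ Finset.range (d-1), m (n+i) := by
        simp only [Finset.sum_add_distrib]; ring
    _ = S + 0 := by rw [hsplit2, hsplit2, hshift, hs₂, ← hm']; ring
    _ = S := by ring
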